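/- arXiv:1105.4078 — 5 statements merged into one kernel-verified Lean document; each statement's English description precedes it below -/
import Mathlib

section
/- Let A be a cyclic n×n matrix over a field F with cyclic vector w, and suppose m_A(t) = f(t)·g(t) with f, g monic. Then the A-cyclic submodule generated by w·f(A) equals the null space (kernel) of g(A). -/
/-- The `A`-cyclic submodule of `Fⁿ` (row vectors, with `A` acting on the right)
generated by a vector `v`: the span of `v, vA, vA², …`. -/
noncomputable def cyclicSpan {F : Type*} [Field F] {n : ℕ}
    (A : Matrix (Fin n) (Fin n) F) (v : Fin n → F) : Submodule F (Fin n → F) :=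
  Submodule.span F (Set.range fun k : ℕ => Matrix.vecMul v (A ^ k))

lemma vecMul_smul_mat {F : Type*} [Field F] {n : ℕ}
    (A : Matrix (Fin n) (Fin n) F) (c : F) (v : Fin n → F) :
    Matrix.vecMul v (c • A) = c • Matrix.vecMul v A := by
  ext j
  simp only [Matrix.vecMul, dotProduct, Matrix.smul_apply, Pi.smul_apply,
    smul_eq_mul, Finset.mul_sum]
  exact Finset.sum_congr rfl fun i _ => by ring

lemma mem_cyclicSpan_iff {F : Type*} [Field F] {n : ℕ}
    (A : Matrix (Fin n) (Fin n) F) (w v : Fin n → F) :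
    v ∈ cyclicSpan A w ↔ ∃ p : Polynomial F, v = Matrix.vecMul w (Polynomial.aeval A p) := by
  constructor
  · intro hv
    induction hv using Submodule.span_induction with
    | mem x hx =>
      obtain ⟨k, rfl⟩ := hx
      exact ⟨Polynomial.X ^ k, by simp⟩
    | zero => exact ⟨0, by simp⟩
    | add x y _ _ hx hy =>
      obtain ⟨p, rfl⟩ := hx
      obtain ⟨q, rfl⟩ := hy
      exact ⟨p + q, by simp [Matrix.vecMul_add]⟩
    | smul c x _ hx =>
      obtain ⟨p, rfl⟩ := hx
      exact ⟨c • p, by simp [vecMul_smul_mat]⟩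
  · rintro ⟨p, rfl⟩
    induction p using Polynomial.induction_on' with
    | add p q hp hq =>
      simpa [Matrix.vecMul_add] using Submodule.add_mem _ hp hq
    | monomial k a =>
      have h1 : Polynomial.aeval A (Polynomial.monomial k a) = a • A ^ k := by
        rw [Polynomial.aeval_monomial, ← Algebra.smul_def]
      rw [h1, vecMul_smul_mat]
      exact Submodule.smul_mem _ _ (Submodule.subset_span ⟨k, rfl⟩)

theorem cyclicSpan_eq_ker {F : Type*} [Field F] {n : ℕ}
    (A : Matrix (Fin n) (Fin n) F) (w : Fin n → F)
    (hw : cyclicSpan A w = ⊤) (f g : Polynomial F) (hf : f.Monic) (hg : g.Monic)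
    (hm : minpoly F A = f * g) :
    cyclicSpan A (Matrix.vecMul w (Polynomial.aeval A f)) =
      LinearMap.ker (Matrix.vecMulLinear (Polynomial.aeval A g)) := by
  have hfg : Polynomial.aeval A f * Polynomial.aeval A g = 0 := by
    rw [← map_mul, ← hm]; exact minpoly.aeval F A
  apply le_antisymm
  · rw [cyclicSpan, Submodule.span_le]
    rintro _ ⟨k, rfl⟩
    simp only [SetLike.mem_coe, LinearMap.mem_ker, Matrix.vecMulLinear_apply,
      Matrix.vecMul_vecMul]
    have h2 : Polynomial.aeval A f * A ^ k * Polynomial.aeval A g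
        = Polynomial.aeval A (f * Polynomial.X ^ k * g) := by
      simp [map_mul, map_pow]
    have h3 : (f * Polynomial.X ^ k * g : Polynomial F) = f * g * Polynomial.X ^ k := by ring
    rw [h2, h3, map_mul, ← hm, minpoly.aeval, zero_mul, Matrix.vecMul_zero]
  · intro v hv
    simp only [LinearMap.mem_ker, Matrix.vecMulLinear_apply] at hv
    have hv' : v ∈ cyclicSpan A w := hw ▸ Submodule.mem_top
    obtain ⟨p, rfl⟩ := (mem_cyclicSpan_iff A w v).mp hv'
    have hzero : Polynomial.aeval A (p * g) = 0 := by
      have hall : ∀ u : Fin n → F, Matrix.vecMul u (Polynomial.aeval A (p * g)) = 0 := by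
        intro u
        have hu : u ∈ cyclicSpan A w := hw ▸ Submodule.mem_top
        obtain ⟨q, rfl⟩ := (mem_cyclicSpan_iff A w u).mp hu
        rw [Matrix.vecMul_vecMul, ← map_mul]
        have hq : q * (p * g) = p * g * q := by ring
        rw [hq, map_mul, map_mul, ← Matrix.vecMul_vecMul, ← Matrix.vecMul_vecMul, hv,
          Matrix.zero_vecMul]
      ext i j
      have h := congrFun (hall (Pi.single i 1)) j
      rwa [Matrix.single_one_vecMul] at h
    have hdvd : minpoly F A ∣ p * g := minpoly.dvd F A hzero
    rw [hm] at hdvd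
    have hfp : f ∣ p := by
      rcases hdvd with ⟨r, hr⟩
      exact ⟨r, mul_right_cancel₀ hg.ne_zero (by rw [hr]; ring)⟩
    obtain ⟨r, rfl⟩ := hfp
    rw [mem_cyclicSpan_iff]
    exact ⟨r, by simp [map_mul, Matrix.vecMul_vecMul]⟩
end

section
/- Let (w, A) be a cyclic pair on V = Fⁿ, let U be an A-invariant subspace of V of dimension r, and let c(t) be the characteristic polynomial of the induced map A|_{V/U}. Then w·c(A) is a cyclic vector for the restriction of A to U. -/
open Polynomial Module

section Aux

variable {F : Type*} [Field F] {n : ℕ} (A : Matrix (Fin n) (Fin n) F)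

lemma vecMul_matrix_smul (a : F) (M : Matrix (Fin n) (Fin n) F) (v : Fin n → F) :
    Matrix.vecMul v (a • M) = a • Matrix.vecMul v M := by
  ext j
  simp [Matrix.vecMul, dotProduct, Finset.mul_sum, mul_left_comm]

lemma vecMul_matrix_sum {ι : Type*} (s : Finset ι) (f : ι → Matrix (Fin n) (Fin n) F)
    (v : Fin n → F) :
    Matrix.vecMul v (∑ i ∈ s, f i) = ∑ i ∈ s, Matrix.vecMul v (f i) := by
  classical
  induction s using Finset.induction with
  | empty => simp
  | insert _ _ h ih => rw [Finset.sum_insert h, Finset.sum_insert h, Matrix.vecMul_add, ih]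

lemma vecMul_pow_eq (k : ℕ) (v : Fin n → F) :
    Matrix.vecMul v (A ^ k) = ((Matrix.vecMulLinear A) ^ k) v := by
  induction k with
  | zero => simp
  | succ k ih =>
    rw [pow_succ, ← Matrix.vecMul_vecMul, ih, pow_succ']
    simp [Matrix.vecMulLinear_apply, Module.End.mul_apply]

lemma vecMul_aeval_eq (q : Polynomial F) (v : Fin n → F) :
    Matrix.vecMul v (Polynomial.aeval A q) = Polynomial.aeval (Matrix.vecMulLinear A) q v := by
  induction q using Polynomial.induction_on' with
  | add p q hp hq => simp [Matrix.vecMul_add, hp, hq]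
  | monomial k a =>
    simp only [Polynomial.aeval_monomial, Algebra.algebraMap_eq_smul_one, smul_mul_assoc,
      one_mul, LinearMap.smul_apply, Module.End.mul_apply, vecMul_matrix_smul, vecMul_pow_eq,
      Module.algebraMap_end_apply]

lemma mkQ_pow_eq (U : Submodule F (Fin n → F)) (hU : U ≤ U.comap (Matrix.vecMulLinear A))
    (k : ℕ) (v : Fin n → F) :
    U.mkQ (((Matrix.vecMulLinear A) ^ k) v)
      = ((Submodule.mapQ U U (Matrix.vecMulLinear A) hU) ^ k) (U.mkQ v) := by
  induction k with
  | zero => simp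
  | succ k ih =>
    rw [pow_succ', Module.End.mul_apply, pow_succ', Module.End.mul_apply, ← ih]
    rw [Submodule.mkQ_apply, Submodule.mkQ_apply, Submodule.mapQ_apply]

lemma mkQ_aeval_eq (U : Submodule F (Fin n → F)) (hU : U ≤ U.comap (Matrix.vecMulLinear A))
    (q : Polynomial F) (v : Fin n → F) :
    U.mkQ (Polynomial.aeval (Matrix.vecMulLinear A) q v)
      = Polynomial.aeval (Submodule.mapQ U U (Matrix.vecMulLinear A) hU) q (U.mkQ v) := by
  induction q using Polynomial.induction_on' with
  | add p q hp hq =>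
    simp only [map_add, LinearMap.add_apply] at hp hq ⊢
    rw [hp, hq]
  | monomial k a =>
    simp only [Polynomial.aeval_monomial, Module.End.mul_apply, Module.algebraMap_end_apply,
      map_smul, mkQ_pow_eq A U hU]

lemma n_le_minpoly_natDegree (w : Fin n → F) (hw : cyclicSpan A w = ⊤) :
    n ≤ (minpoly F A).natDegree := by
  rcases Nat.eq_zero_or_pos n with hn | hn
  · omega
  haveI : Nonempty (Fin n) := ⟨⟨0, hn⟩⟩
  have hint : IsIntegral F A :=
    ⟨A.charpoly, A.charpoly_monic, by rw [← Polynomial.aeval_def, Matrix.aeval_self_charpoly]⟩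
  have hmmonic : (minpoly F A).Monic := minpoly.monic hint
  set d := (minpoly F A).natDegree with hd
  have hdpos : 0 < d := minpoly.natDegree_pos hint
  have key : ∀ k : ℕ, Matrix.vecMul w (A ^ k) ∈
      Submodule.span F (Set.range fun i : Fin d => Matrix.vecMul w (A ^ (i : ℕ))) := by
    intro k
    have hmod : Polynomial.aeval A ((X : Polynomial F) ^ k) =
        Polynomial.aeval A ((X : Polynomial F) ^ k %ₘ minpoly F A) := by
      conv_lhs => rw [← Polynomial.modByMonic_add_div ((X : Polynomial F) ^ k) (minpoly F A)]
      rw [map_add, map_mul, minpoly.aeval, zero_mul, add_zero]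
    have hlt : ((X : Polynomial F) ^ k %ₘ minpoly F A).natDegree < d := by
      have hdeg := Polynomial.degree_modByMonic_lt ((X : Polynomial F) ^ k) hmmonic
      rcases eq_or_ne ((X : Polynomial F) ^ k %ₘ minpoly F A) 0 with h0 | h0
      · simpa [h0] using hdpos
      · exact Polynomial.natDegree_lt_natDegree h0 hdeg
    have hkey : Matrix.vecMul w (A ^ k) =
        ∑ i ∈ Finset.range d,
          ((X : Polynomial F) ^ k %ₘ minpoly F A).coeff i • Matrix.vecMul w (A ^ i) := by
      have h1 : Matrix.vecMul w (A ^ k)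
          = Matrix.vecMul w (Polynomial.aeval A ((X : Polynomial F) ^ k)) := by simp
      rw [h1, hmod, Polynomial.aeval_eq_sum_range' hlt, vecMul_matrix_sum]
      exact Finset.sum_congr rfl fun i _ => by rw [vecMul_matrix_smul]
    rw [hkey]
    refine Submodule.sum_mem _ fun i hi => Submodule.smul_mem _ _ ?_
    exact Submodule.subset_span ⟨⟨i, Finset.mem_range.mp hi⟩, rfl⟩
  have htop : (⊤ : Submodule F (Fin n → F)) ≤
      Submodule.span F (Set.range fun i : Fin d => Matrix.vecMul w (A ^ (i : ℕ))) := by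
    rw [← hw]
    exact Submodule.span_le.mpr (by rintro x ⟨k, rfl⟩; exact key k)
  calc n = finrank F (Fin n → F) := (Module.finrank_fin_fun F).symm
    _ = finrank F (⊤ : Submodule F (Fin n → F)) := (finrank_top F _).symm
    _ ≤ finrank F (Submodule.span F
        (Set.range fun i : Fin d => Matrix.vecMul w (A ^ (i : ℕ)))) :=
      Submodule.finrank_mono htop
    _ ≤ Fintype.card (Fin d) := finrank_range_le_card _
    _ = d := Fintype.card_fin d

end Aux

theorem cyclic_vector_restriction {F : Type*} [Field F] {n r : ℕ}
    (A : Matrix (Fin n) (Fin n) F) (w : Fin n → F)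
    (hw : cyclicSpan A w = ⊤) (U : Submodule F (Fin n → F))
    (hU : U ≤ U.comap (Matrix.vecMulLinear A)) (hr : Module.finrank F U = r)
    (c : Polynomial F)
    (hc : c = LinearMap.charpoly (Submodule.mapQ U U (Matrix.vecMulLinear A) hU)) :
    cyclicSpan A (Matrix.vecMul w (Polynomial.aeval A c)) = U := by
  classical
  set wc := Matrix.vecMul w (Polynomial.aeval A c) with hwc
  have hrn : r ≤ n := by
    have h := Submodule.finrank_le U
    rwa [hr, Module.finrank_fin_fun] at h
  have hquot : finrank F ((Fin n → F) ⧸ U) + r = n := by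
    have h := Submodule.finrank_quotient_add_finrank U
    rwa [hr, Module.finrank_fin_fun] at h
  have hcmonic : c.Monic := by rw [hc]; exact LinearMap.charpoly_monic _
  have hcdeg : c.natDegree = n - r := by
    rw [hc, LinearMap.charpoly_natDegree]
    omega
  -- all generators lie in U
  have hmemU : ∀ k : ℕ, Matrix.vecMul wc (A ^ k) ∈ U := by
    intro k
    induction k with
    | zero =>
      simp only [pow_zero, Matrix.vecMul_one]
      rw [hwc, ← Submodule.Quotient.mk_eq_zero U, ← Submodule.mkQ_apply, vecMul_aeval_eq,
        mkQ_aeval_eq A U hU, hc, LinearMap.aeval_self_charpoly, LinearMap.zero_apply]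
    | succ k ih =>
      rw [pow_succ, ← Matrix.vecMul_vecMul]
      exact hU ih
  have hle : cyclicSpan A wc ≤ U :=
    Submodule.span_le.mpr (by rintro x ⟨k, rfl⟩; exact hmemU k)
  -- linear independence of the first r generators
  set v : Fin r → (Fin n → F) := fun i => Matrix.vecMul wc (A ^ (i : ℕ)) with hv
  have hindep : LinearIndependent F v := by
    rw [Fintype.linearIndependent_iff]
    intro g hg
    set p : Polynomial F := ∑ i : Fin r, Polynomial.C (g i) * X ^ (i : ℕ) with hp
    have hsum : Matrix.vecMul w (Polynomial.aeval A (c * p)) = 0 := by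
      have h1 : Matrix.vecMul w (Polynomial.aeval A (c * p)) = ∑ i : Fin r, g i • v i := by
        rw [map_mul, ← Matrix.vecMul_vecMul, ← hwc, hp, map_sum, vecMul_matrix_sum]
        refine Finset.sum_congr rfl fun i _ => ?_
        rw [map_mul, Polynomial.aeval_C, Polynomial.aeval_X_pow,
          Algebra.algebraMap_eq_smul_one, smul_mul_assoc, one_mul, vecMul_matrix_smul]
      rw [h1, hg]
    have hM0 : Polynomial.aeval A (c * p) = 0 := by
      have hall : ∀ x : Fin n → F, Matrix.vecMul x (Polynomial.aeval A (c * p)) = 0 := by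
        intro x
        have hx : x ∈ cyclicSpan A w := by rw [hw]; trivial
        refine Submodule.span_induction ?_ ?_ ?_ ?_ hx
        · rintro _ ⟨k, rfl⟩
          have hcomm : A ^ k * Polynomial.aeval A (c * p)
              = Polynomial.aeval A (c * p) * A ^ k := by
            rw [← Polynomial.aeval_X_pow (R := F) (x := A), ← map_mul, ← map_mul, mul_comm]
          rw [Matrix.vecMul_vecMul, hcomm, ← Matrix.vecMul_vecMul, hsum, Matrix.zero_vecMul]
        · rw [Matrix.zero_vecMul]
        · intro a b _ _ ha hb
          rw [Matrix.add_vecMul, ha, hb, add_zero]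
        · intro a x _ hx
          rw [Matrix.smul_vecMul, hx, smul_zero]
      ext i j
      have h := congrFun (hall (Pi.single i 1)) j
      rwa [Matrix.single_one_vecMul] at h
    have hpz : p = 0 := by
      by_contra hp0
      have hc0 : c ≠ 0 := hcmonic.ne_zero
      have hcp0 : c * p ≠ 0 := mul_ne_zero hc0 hp0
      have hdvd : minpoly F A ∣ c * p := minpoly.dvd F A hM0
      have h1 : (minpoly F A).natDegree ≤ (c * p).natDegree :=
        Polynomial.natDegree_le_of_dvd hdvd hcp0
      have h2 : (c * p).natDegree = c.natDegree + p.natDegree :=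
        Polynomial.natDegree_mul hc0 hp0
      have hrpos : 0 < r := by
        rcases Nat.eq_zero_or_pos r with h | h
        · exfalso
          apply hp0
          rw [hp]
          haveI : IsEmpty (Fin r) := by rw [h]; infer_instance
          simp
        · exact h
      have h3 : p.natDegree ≤ r - 1 := by
        rw [hp]
        refine Polynomial.natDegree_sum_le_of_forall_le _ _ fun i _ => ?_
        exact le_trans (Polynomial.natDegree_C_mul_X_pow_le (g i) (i : ℕ)) (by omega)
      have h4 := n_le_minpoly_natDegree A w hw
      omega
    intro i
    have hco : p.coeff (i : ℕ) = 0 := by rw [hpz]; simp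
    rw [hp, Polynomial.finset_sum_coeff] at hco
    simp only [Polynomial.coeff_C_mul, Polynomial.coeff_X_pow, mul_ite, mul_one, mul_zero] at hco
    simp only [Fin.val_eq_val] at hco
    rwa [Finset.sum_ite_eq Finset.univ i g, if_pos (Finset.mem_univ i)] at hco
  have hspan : Submodule.span F (Set.range v) ≤ cyclicSpan A wc :=
    Submodule.span_le.mpr (by rintro x ⟨i, rfl⟩; exact Submodule.subset_span ⟨(i : ℕ), rfl⟩)
  have hrle : r ≤ finrank F (cyclicSpan A wc) := by
    have h1 : finrank F (Submodule.span F (Set.range v)) = r := by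
      rw [finrank_span_eq_card hindep, Fintype.card_fin]
    rw [← h1]
    exact Submodule.finrank_mono hspan
  exact Submodule.eq_of_le_of_finrank_le hle (by rw [hr]; exact hrle)
end

section
/- Let A be a cyclic n×n matrix over a field F, let U be an A-invariant subspace, and let f be the monic divisor of m_A with m_A = f·g and U = ker g(A). Then the minimal polynomial of the restriction of A to U equals g. -/
open Polynomial Matrix

lemma aeval_restrict_coe {F M : Type*} [Field F] [AddCommGroup M] [Module F M]
    (L : M →ₗ[F] M) (p : Submodule F M) (h : ∀ x ∈ p, L x ∈ p)
    (q : F[X]) (x : p) :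
    ((Polynomial.aeval (L.restrict h) q x : p) : M) = Polynomial.aeval L q (x : M) := by
  induction q using Polynomial.induction_on' with
  | add a b ha hb =>
    simp only [map_add, LinearMap.add_apply, Submodule.coe_add, ha, hb]
  | monomial k a =>
    simp only [Polynomial.aeval_monomial, ← smul_eq_mul, algebraMap_smul,
      LinearMap.smul_apply, SetLike.val_smul, Module.End.pow_restrict k h,
      LinearMap.restrict_coe_apply]

theorem minpoly_restrict_ker {F : Type*} [Field F] {n : ℕ}
    (A : Matrix (Fin n) (Fin n) F) (hA : minpoly F A = A.charpoly)
    (f g : Polynomial F) (hf : f.Monic) (hg : g.Monic)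
    (hm : minpoly F A = f * g)
    (hU : ∀ x ∈ LinearMap.ker (Matrix.vecMulLinear (Polynomial.aeval A g)),
        Matrix.vecMulLinear A x ∈ LinearMap.ker (Matrix.vecMulLinear (Polynomial.aeval A g))) :
    minpoly F ((Matrix.vecMulLinear A).restrict hU) = g := by
  set L := Matrix.vecMulLinear A
  set U := LinearMap.ker (Matrix.vecMulLinear (Polynomial.aeval A g))
  set T := L.restrict hU
  -- key: aeval of L equals vecMulLinear of aeval of A
  have powL : ∀ (k : ℕ) (x : Fin n → F), (L ^ k) x = x ᵥ* (A ^ k) := by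
    intro k
    induction k with
    | zero => intro x; simp [Matrix.vecMul_one]
    | succ k ih =>
      intro x
      rw [pow_succ, Module.End.mul_apply, ih, Matrix.vecMulLinear_apply,
        Matrix.vecMul_vecMul, ← pow_succ']
  have key : ∀ q : F[X], Polynomial.aeval L q = Matrix.vecMulLinear (Polynomial.aeval A q) := by
    intro q
    induction q using Polynomial.induction_on' with
    | add a b ha hb =>
      apply LinearMap.ext; intro x
      simp [ha, hb, Matrix.vecMul_add]
    | monomial k a =>
      apply LinearMap.ext; intro x
      simp only [Polynomial.aeval_monomial, ← smul_eq_mul, algebraMap_smul, _root_.map_smul,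
        LinearMap.smul_apply, Matrix.vecMulLinear_apply]
      rw [powL k x]
      funext i
      simp [Matrix.vecMul, dotProduct, Finset.mul_sum, mul_left_comm]
  have hTg : Polynomial.aeval T g = 0 := by
    ext x : 1
    have := aeval_restrict_coe L U hU g x
    rw [key g] at this
    have hx : (x : Fin n → F) ∈ U := x.2
    rw [LinearMap.mem_ker] at hx
    apply Subtype.ext; rw [this]; exact hx
  have hint : IsIntegral F T := (Algebra.IsIntegral.isIntegral T)
  have h1 : minpoly F T ∣ g := minpoly.dvd F T hTg
  -- conversely g ∣ minpoly T
  set p := minpoly F T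
  have hfp : Polynomial.aeval A (f * p) = 0 := by
    have : Matrix.vecMulLinear (Polynomial.aeval A (f * p)) = 0 := by
      apply LinearMap.ext; intro x
      rw [_root_.map_mul]
      have hmem : (x ᵥ* Polynomial.aeval A f) ∈ U := by
        rw [LinearMap.mem_ker]
        show (x ᵥ* Polynomial.aeval A f) ᵥ* Polynomial.aeval A g = 0
        rw [Matrix.vecMul_vecMul, ← _root_.map_mul, ← hm, minpoly.aeval, Matrix.vecMul_zero]
      have hTp : Polynomial.aeval T p = 0 := minpoly.aeval F T
      have := aeval_restrict_coe L U hU p ⟨_, hmem⟩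
      rw [key p, hTp] at this
      simp only [LinearMap.zero_apply, ZeroMemClass.coe_zero, Matrix.vecMulLinear_apply] at this
      show x ᵥ* (Polynomial.aeval A f * Polynomial.aeval A p) = 0
      rw [← Matrix.vecMul_vecMul, this]
    have inj : Function.Injective (Matrix.vecMulLinear (m := Fin n) (n := Fin n) (R := F)) := by
      intro M N h
      ext i j
      have := congrArg (fun φ => φ (Pi.single i 1) j) h
      simpa [Matrix.vecMulLinear_apply, Matrix.vecMul, dotProduct,
        Pi.single_apply, Finset.sum_ite_eq] using this
    have := inj (by rw [this]; apply LinearMap.ext; intro x; simp : Matrix.vecMulLinear (Polynomial.aeval A (f * p)) = Matrix.vecMulLinear 0)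
    exact this
  have h2 : f * g ∣ f * p := by
    rw [← hm]; exact minpoly.dvd F A hfp
  have hg2 : g ∣ p := (mul_dvd_mul_iff_left (a := f) hf.ne_zero).mp h2
  exact Polynomial.eq_of_monic_of_associated (minpoly.monic hint) hg
    (associated_of_dvd_dvd h1 hg2)
end

section
/- Let A ∈ M(n, F) act on V = Fⁿ and suppose V = ⊕_{i=1}^k V_i where each V_i is A-invariant. Let c_i and m_i be the characteristic and minimal polynomials of A restricted to V_i. Then A is cyclic if and only if each restriction A|_{V_i} is cyclic and gcd(c_i, c_j) = 1 for all i ≠ j. -/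
open Polynomial Matrix Module

section AuxCyclic
variable {F : Type*} [Field F]

private lemma aux_aeval_transpose {n : ℕ} (A : Matrix (Fin n) (Fin n) F) (p : F[X]) :
    aeval Aᵀ p = (aeval A p)ᵀ := by
  rw [aeval_eq_sum_range, aeval_eq_sum_range, Matrix.transpose_sum]
  exact Finset.sum_congr rfl fun i _ => by rw [Matrix.transpose_smul, Matrix.transpose_pow]

private lemma aux_minpoly_transpose {n : ℕ} (A : Matrix (Fin n) (Fin n) F) :
    minpoly F Aᵀ = minpoly F A := by
  have h1 : aeval A (minpoly F Aᵀ) = 0 := by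
    have h := minpoly.aeval F Aᵀ
    rw [aux_aeval_transpose] at h
    simpa using congrArg Matrix.transpose h
  have h2 : aeval Aᵀ (minpoly F A) = 0 := by
    rw [aux_aeval_transpose, minpoly.aeval, Matrix.transpose_zero]
  exact Polynomial.eq_of_monic_of_associated
    (minpoly.monic (Matrix.isIntegral _)) (minpoly.monic (Matrix.isIntegral _))
    (associated_of_dvd_dvd (minpoly.dvd _ _ h2) (minpoly.dvd _ _ h1))

private lemma aux_charpoly_transpose {n : ℕ} (A : Matrix (Fin n) (Fin n) F) :
    Aᵀ.charpoly = A.charpoly := by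
  rw [Matrix.charpoly, Matrix.charpoly, ← Matrix.det_transpose (charmatrix A)]
  congr 1
  ext i j
  by_cases hij : i = j
  · subst hij; simp
  · simp [Matrix.charmatrix_apply_ne _ _ _ hij, Matrix.charmatrix_apply_ne _ _ _ (Ne.symm hij),
      Matrix.transpose_apply]

private lemma aux_coe_aeval {M : Type*} [AddCommGroup M] [Module F M]
    {p : Submodule F M} (f : M →ₗ[F] M) (g : p →ₗ[F] p)
    (hg : ∀ x : p, (g x : M) = f x) (q : F[X]) (x : p) :
    (↑(aeval g q x) : M) = aeval f q ↑x := by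
  have hpow : ∀ (n : ℕ) (x : p), ((g ^ n) x : M) = (f ^ n) ↑x := by
    intro n
    induction n with
    | zero => intro x; simp
    | succ n ih =>
        intro x
        rw [pow_succ, pow_succ, Module.End.mul_apply, Module.End.mul_apply, ih, hg]
  induction q using Polynomial.induction_on' with
  | add a b ha hb => simp [ha, hb]
  | monomial k c =>
    rw [aeval_monomial, aeval_monomial, Module.End.mul_apply, Module.End.mul_apply,
      Module.algebraMap_end_apply, Module.algebraMap_end_apply, SetLike.val_smul, hpow]

private lemma aux_monic_dvd_eq {p q : F[X]} (hp : p.Monic) (hq : q.Monic) (hd : p ∣ q)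
    (hdeg : q.natDegree ≤ p.natDegree) : p = q := by
  obtain ⟨u, rfl⟩ := hd
  have hu0 : u ≠ 0 := fun h => by simp [h] at hq
  have : (p * u).natDegree = p.natDegree + u.natDegree := natDegree_mul hp.ne_zero hu0
  have hu1 : u = 1 := (hp.of_mul_monic_left hq).natDegree_eq_zero.mp (by omega)
  rw [hu1, mul_one]

private lemma aux_main {M : Type*} [AddCommGroup M] [Module F M] [FiniteDimensional F M]
    {k : ℕ} (f : M →ₗ[F] M) (V : Fin k → Submodule F M) (hV : DirectSum.IsInternal V)
    (g : ∀ i, V i →ₗ[F] V i) (hg : ∀ i (x : V i), ((g i) x : M) = f x) :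
    (minpoly F f = LinearMap.charpoly f) ↔
      ((∀ i, minpoly F (g i) = LinearMap.charpoly (g i)) ∧
       ∀ i j, i ≠ j → IsCoprime (LinearMap.charpoly (g i)) (LinearMap.charpoly (g j))) := by
  classical
  have hMfin : finrank F M = ∑ i, finrank F (V i) := by
    rw [← Module.finrank_directSum]
    exact (LinearEquiv.ofBijective (DirectSum.coeLinearMap V) hV).symm.finrank_eq
  have hm_monic : ∀ i, (minpoly F (g i)).Monic :=
    fun i => minpoly.monic (LinearMap.isIntegral _)
  have hc_monic : ∀ i, (LinearMap.charpoly (g i)).Monic := fun i => LinearMap.charpoly_monic _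
  have hmc : ∀ i, minpoly F (g i) ∣ LinearMap.charpoly (g i) :=
    fun i => LinearMap.minpoly_dvd_charpoly _
  have hcdeg : ∀ i, (LinearMap.charpoly (g i)).natDegree = finrank F (V i) :=
    fun i => LinearMap.charpoly_natDegree _
  have hfchar_deg : (LinearMap.charpoly f).natDegree = finrank F M :=
    LinearMap.charpoly_natDegree f
  have hsumc : ∑ i, (LinearMap.charpoly (g i)).natDegree = finrank F M := by
    simp only [hcdeg]; exact hMfin.symm
  have hdvd_min : ∀ i, minpoly F (g i) ∣ minpoly F f := by
    intro i
    apply minpoly.dvd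
    refine LinearMap.ext fun x => Subtype.val_injective ?_
    rw [aux_coe_aeval f (g i) (hg i)]
    simp [minpoly.aeval F f]
  have hker : ∀ P : F[X], (∀ i, minpoly F (g i) ∣ P) → Polynomial.aeval f P = 0 := by
    intro P hP
    have hle : ∀ i, V i ≤ LinearMap.ker (Polynomial.aeval f P) := by
      intro i x hx
      obtain ⟨r, hr⟩ := hP i
      rw [LinearMap.mem_ker, hr, _root_.map_mul, Module.End.mul_apply]
      have h1 : Polynomial.aeval f r x = ↑(Polynomial.aeval (g i) r ⟨x, hx⟩) :=
        (aux_coe_aeval f (g i) (hg i) r ⟨x, hx⟩).symm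
      rw [h1, ← aux_coe_aeval f (g i) (hg i) (minpoly F (g i)), minpoly.aeval]
      simp
    have hker_top : LinearMap.ker (Polynomial.aeval f P) = ⊤ := by
      rw [eq_top_iff, ← hV.submodule_iSup_eq_top]
      exact iSup_le hle
    exact LinearMap.ker_eq_top.mp hker_top
  constructor
  · intro h
    have hball : LinearMap.charpoly f ∣ ∏ i, minpoly F (g i) := by
      rw [← h]
      exact minpoly.dvd _ _ (hker _ fun i => Finset.dvd_prod_of_mem _ (Finset.mem_univ i))
    have hprod_ne : (∏ i, minpoly F (g i)) ≠ 0 :=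
      Finset.prod_ne_zero_iff.mpr fun i _ => (hm_monic i).ne_zero
    have hdeg1 : finrank F M ≤ ∑ i, (minpoly F (g i)).natDegree := by
      calc finrank F M = (LinearMap.charpoly f).natDegree := hfchar_deg.symm
        _ ≤ (∏ i, minpoly F (g i)).natDegree := Polynomial.natDegree_le_of_dvd hball hprod_ne
        _ = ∑ i, (minpoly F (g i)).natDegree :=
            Polynomial.natDegree_prod _ _ (fun i _ => (hm_monic i).ne_zero)
    have hdeg2 : ∑ i, (minpoly F (g i)).natDegree ≤ ∑ i, (LinearMap.charpoly (g i)).natDegree :=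
      Finset.sum_le_sum fun i _ => Polynomial.natDegree_le_of_dvd (hmc i) (hc_monic i).ne_zero
    have hsum_eq : ∑ i, (minpoly F (g i)).natDegree = ∑ i, (LinearMap.charpoly (g i)).natDegree :=
      le_antisymm hdeg2 (by omega)
    have hdegeq : ∀ i, (minpoly F (g i)).natDegree = (LinearMap.charpoly (g i)).natDegree := by
      have := (Finset.sum_eq_sum_iff_of_le
        (fun i _ => Polynomial.natDegree_le_of_dvd (hmc i) (hc_monic i).ne_zero)).mp hsum_eq
      exact fun i => this i (Finset.mem_univ i)
    have hmc_eq : ∀ i, minpoly F (g i) = LinearMap.charpoly (g i) := fun i =>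
      aux_monic_dvd_eq (hm_monic i) (hc_monic i) (hmc i) (hdegeq i).ge
    refine ⟨hmc_eq, fun i j hij => ?_⟩
    set d := EuclideanDomain.gcd (minpoly F (g i)) (minpoly F (g j)) with hd
    have hdvd_i : d ∣ minpoly F (g i) := EuclideanDomain.gcd_dvd_left _ _
    have hdvd_j : d ∣ minpoly F (g j) := EuclideanDomain.gcd_dvd_right _ _
    have hd0 : d ≠ 0 := fun h0 =>
      (hm_monic i).ne_zero (EuclideanDomain.gcd_eq_zero_iff.mp h0).1
    obtain ⟨mi', hmi'⟩ := hdvd_i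
    have hmi'0 : mi' ≠ 0 := by
      intro h0
      exact (hm_monic i).ne_zero (by rw [hmi', h0, mul_zero])
    set P := mi' * ∏ l ∈ Finset.univ.erase i, minpoly F (g l) with hP
    have hprodE_ne : (∏ l ∈ Finset.univ.erase i, minpoly F (g l)) ≠ 0 :=
      Finset.prod_ne_zero_iff.mpr fun l _ => (hm_monic l).ne_zero
    have hdvdP : ∀ l, minpoly F (g l) ∣ P := by
      intro l
      by_cases hl : l = i
      · subst hl
        obtain ⟨t, ht⟩ : d ∣ ∏ l' ∈ Finset.univ.erase l, minpoly F (g l') :=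
          hdvd_j.trans (Finset.dvd_prod_of_mem _
            (Finset.mem_erase.mpr ⟨Ne.symm hij, Finset.mem_univ j⟩))
        exact ⟨t, by rw [hP, ht, hmi']; ring⟩
      · exact Dvd.dvd.mul_left
          (Finset.dvd_prod_of_mem _ (Finset.mem_erase.mpr ⟨hl, Finset.mem_univ l⟩)) _
    have hcharP : LinearMap.charpoly f ∣ P := by
      rw [← h]; exact minpoly.dvd _ _ (hker _ hdvdP)
    have hP_ne : P ≠ 0 := mul_ne_zero hmi'0 hprodE_ne
    have hPd : P * d = ∏ l, minpoly F (g l) := by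
      rw [hP, ← Finset.mul_prod_erase Finset.univ _ (Finset.mem_univ i), hmi']; ring
    have hdegPd : P.natDegree + d.natDegree = finrank F M := by
      have h1 : (P * d).natDegree = P.natDegree + d.natDegree := natDegree_mul hP_ne hd0
      have h2 : (∏ l, minpoly F (g l)).natDegree = ∑ l, (minpoly F (g l)).natDegree :=
        Polynomial.natDegree_prod _ _ (fun l _ => (hm_monic l).ne_zero)
      have h3 : ∑ l, (minpoly F (g l)).natDegree = finrank F M := by
        rw [hsum_eq, hsumc]
      rw [← h1, hPd, h2, h3]
    have hlow : finrank F M ≤ P.natDegree := by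
      rw [← hfchar_deg]
      exact Polynomial.natDegree_le_of_dvd hcharP hP_ne
    have hd_deg : d.natDegree = 0 := by omega
    have hdu : IsUnit d := by
      obtain ⟨a, ha⟩ := Polynomial.natDegree_eq_zero.mp hd_deg
      have ha0 : a ≠ 0 := fun h0 => hd0 (by rw [← ha, h0, map_zero])
      rw [← ha]
      exact Polynomial.isUnit_C.mpr (Ne.isUnit ha0)
    have hcop : IsCoprime (minpoly F (g i)) (minpoly F (g j)) :=
      EuclideanDomain.gcd_isUnit_iff.mp hdu
    rwa [hmc_eq i, hmc_eq j] at hcop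
  · rintro ⟨h1, h2⟩
    have hdvd : (∏ i, LinearMap.charpoly (g i)) ∣ minpoly F f :=
      Finset.prod_dvd_of_coprime (fun i _ j _ hij => h2 i j hij)
        (fun i _ => (h1 i) ▸ hdvd_min i)
    have hmin_ne : minpoly F f ≠ 0 := (minpoly.monic (LinearMap.isIntegral f)).ne_zero
    have hle : (LinearMap.charpoly f).natDegree ≤ (minpoly F f).natDegree := by
      have hd := Polynomial.natDegree_le_of_dvd hdvd hmin_ne
      rw [Polynomial.natDegree_prod _ _ (fun i _ => (hc_monic i).ne_zero), hsumc] at hd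
      omega
    exact aux_monic_dvd_eq (minpoly.monic (LinearMap.isIntegral f)) (LinearMap.charpoly_monic f)
      (LinearMap.minpoly_dvd_charpoly f) hle

end AuxCyclic

theorem cyclic_iff_summands_cyclic_coprime {F : Type*} [Field F] {n k : ℕ}
    (A : Matrix (Fin n) (Fin n) F)
    (V : Fin k → Submodule F (Fin n → F)) (hV : DirectSum.IsInternal V)
    (hinv : ∀ i, ∀ x ∈ V i, Matrix.vecMulLinear A x ∈ V i) :
    (minpoly F A = A.charpoly) ↔
      ((∀ i, minpoly F ((Matrix.vecMulLinear A).restrict (hinv i)) =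
          LinearMap.charpoly ((Matrix.vecMulLinear A).restrict (hinv i))) ∧
       ∀ i j, i ≠ j →
         IsCoprime (LinearMap.charpoly ((Matrix.vecMulLinear A).restrict (hinv i)))
           (LinearMap.charpoly ((Matrix.vecMulLinear A).restrict (hinv j)))) := by
  have e1 : A.vecMulLinear = Matrix.toLin' Aᵀ := by
    rw [Matrix.toLin'_apply', ← Matrix.vecMulLinear_transpose, Matrix.transpose_transpose]
  have h1 : minpoly F A = minpoly F A.vecMulLinear := by
    rw [e1, Matrix.minpoly_toLin', aux_minpoly_transpose]
  have h2 : A.charpoly = LinearMap.charpoly A.vecMulLinear := by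
    have h3 : LinearMap.toMatrix (Pi.basisFun F (Fin n)) (Pi.basisFun F (Fin n))
        A.vecMulLinear = Aᵀ := by
      rw [LinearMap.toMatrix_eq_toMatrix', e1, LinearMap.toMatrix'_toLin']
    rw [← LinearMap.charpoly_toMatrix A.vecMulLinear (Pi.basisFun F (Fin n)), h3,
      aux_charpoly_transpose]
  rw [h1, h2]
  exact aux_main A.vecMulLinear V hV (fun i => (A.vecMulLinear).restrict (hinv i))
    (fun i x => rfl)
end

section
/- Let n = i·j, let p be a monic irreducible polynomial of degree i over F_q, and let A ∈ M(n, F_q) be a cyclic matrix with characteristic polynomial p^j. Then the centraliser of A in GL(n, F_q) has order q^{ij}·(1 − q^{−i}). -/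
open Polynomial Matrix

section aux

variable {F : Type*} [Field F] [Fintype F] [DecidableEq F]

private lemma matrix_ext_mulVec {n : ℕ} {M N : Matrix (Fin n) (Fin n) F}
    (h : ∀ w, M *ᵥ w = N *ᵥ w) : M = N := by
  ext r s
  have := congrFun (h (Pi.single s 1)) r
  simpa [Matrix.mulVec_single] using this

/-- centraliser of a cyclic matrix with primary char poly consists of polynomials in `A`. -/
private lemma centralizer_eq_aeval {n i j : ℕ} (hn : n = i * j) (hj : 0 < j) (hi : 0 < i)
    (p : Polynomial F) (hp : p.Monic) (hirr : Irreducible p) (hdeg : p.natDegree = i)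
    (A : Matrix (Fin n) (Fin n) F) (hmin : minpoly F A = p ^ j)
    (hch : A.charpoly = p ^ j)
    (B : Matrix (Fin n) (Fin n) F) (hB : B * A = A * B) :
    ∃ f : Polynomial F, aeval A f = B := by
  have hn0 : 0 < n := hn ▸ Nat.mul_pos hi hj
  have hp0 : p ≠ 0 := hp.ne_zero
  have hprime : Prime p := hirr.prime
  have hdegpj : (p ^ j).natDegree = n := by
    rw [Polynomial.natDegree_pow, hdeg, hn, Nat.mul_comm]
  have aevalCH : aeval A (p ^ j) = 0 := by rw [← hch]; exact Matrix.aeval_self_charpoly A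
  -- a vector not killed by p^(j-1)(A)
  have hne : aeval A (p ^ (j - 1)) ≠ 0 := by
    intro h0
    have hdvd := minpoly.dvd F A h0
    rw [hmin] at hdvd
    have hne' : p ^ (j - 1) ≠ 0 := pow_ne_zero _ hp0
    have hle := Polynomial.natDegree_le_of_dvd hdvd hne'
    rw [Polynomial.natDegree_pow, Polynomial.natDegree_pow] at hle
    obtain ⟨j', rfl⟩ : ∃ j', j = j' + 1 := ⟨j - 1, by omega⟩
    simp only [Nat.add_sub_cancel, Nat.succ_mul] at hle
    omega
  obtain ⟨v, hv⟩ : ∃ v : Fin n → F, (aeval A (p ^ (j - 1))) *ᵥ v ≠ 0 := by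
    by_contra hc
    push_neg at hc
    exact hne (matrix_ext_mulVec (M := aeval A (p ^ (j - 1))) (N := 0)
      (by simpa [Matrix.zero_mulVec] using hc))
  -- the annihilator of v contains no nonzero polynomial of degree < n
  have key : ∀ g : F[X], g ≠ 0 → g.natDegree < n → aeval A g *ᵥ v ≠ 0 := by
    intro g hg hdlt hzero
    have hd1 : EuclideanDomain.gcd g (p ^ j) ∣ g := EuclideanDomain.gcd_dvd_left _ _
    have hd2 : EuclideanDomain.gcd g (p ^ j) ∣ p ^ j := EuclideanDomain.gcd_dvd_right _ _
    obtain ⟨k, hk, hassoc⟩ := (dvd_prime_pow hprime j).1 hd2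
    have hdv : aeval A (EuclideanDomain.gcd g (p ^ j)) *ᵥ v = 0 := by
      rw [EuclideanDomain.gcd_eq_gcd_ab g (p ^ j), map_add, mul_comm g, _root_.map_mul, _root_.map_mul,
        aevalCH, zero_mul, add_zero, ← Matrix.mulVec_mulVec, hzero, Matrix.mulVec_zero]
    rcases eq_or_lt_of_le hk with hkj | hklt
    · subst hkj
      have hpj : p ^ k ∣ g := (hassoc.symm.dvd).trans hd1
      have := Polynomial.natDegree_le_of_dvd hpj hg
      rw [hdegpj] at this
      omega
    · apply hv
      have hpk : aeval A (p ^ k) *ᵥ v = 0 := by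
        obtain ⟨u, hu⟩ := hassoc
        rw [← hu, mul_comm, _root_.map_mul, ← Matrix.mulVec_mulVec, hdv, Matrix.mulVec_zero]
      have hko : k + (j - 1 - k) = j - 1 := by omega
      rw [← hko, pow_add, mul_comm, _root_.map_mul, ← Matrix.mulVec_mulVec, hpk, Matrix.mulVec_zero]
  -- the "evaluate and apply to v" linear map
  let ψ : F[X] →ₗ[F] (Fin n → F) :=
    { toFun := fun f => aeval A f *ᵥ v
      map_add' := by intro f g; simp [map_add, Matrix.add_mulVec]
      map_smul' := by intro c f; simp [Matrix.smul_mulVec] }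
  have hψX : ∀ m : ℕ, ψ (X ^ m) = (A ^ m) *ᵥ v := by
    intro m; show aeval A (X ^ m) *ᵥ v = _; rw [map_pow, aeval_X]
  -- linear independence of v, Av, ..., A^(n-1) v
  have li : LinearIndependent F (fun m : Fin n => (A ^ (m : ℕ)) *ᵥ v) := by
    rw [Fintype.linearIndependent_iff]
    intro c hc m
    set g : F[X] := ∑ k : Fin n, C (c k) * X ^ (k : ℕ) with hgdef
    have hcoeff : ∀ m : Fin n, g.coeff (m : ℕ) = c m := by
      intro m
      rw [hgdef, Polynomial.finset_sum_coeff, Finset.sum_eq_single m]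
      · simp [Polynomial.coeff_C_mul, Polynomial.coeff_X_pow]
      · intro b _ hbm
        rw [Polynomial.coeff_C_mul, Polynomial.coeff_X_pow, if_neg, mul_zero]
        exact fun h => hbm (Fin.val_injective h.symm)
      · intro h; exact absurd (Finset.mem_univ m) h
    have hg0 : ψ g = 0 := by
      rw [hgdef, map_sum]
      have : ∀ k : Fin n, ψ (C (c k) * X ^ (k : ℕ)) = c k • ((A ^ (k : ℕ)) *ᵥ v) := by
        intro k
        rw [Polynomial.C_mul', _root_.map_smul, hψX]
      simp only [this]
      exact hc
    have hdle : g.natDegree < n := by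
      have := Polynomial.natDegree_sum_le_of_forall_le Finset.univ
        (fun k : Fin n => C (c k) * X ^ (k : ℕ))
        (fun k _ => (Polynomial.natDegree_C_mul_X_pow_le (c k) (k : ℕ)).trans
          (by omega : (k : ℕ) ≤ n - 1))
      rw [← hgdef] at this
      omega
    have hgz : g = 0 := by
      by_contra hgne
      exact key g hgne hdle hg0
    rw [← hcoeff m, hgz, Polynomial.coeff_zero]
  haveI : Nonempty (Fin n) := ⟨⟨0, hn0⟩⟩
  have hspan : LinearMap.range ψ = ⊤ := by
    have h1 : Submodule.span F (Set.range fun m : Fin n => (A ^ (m : ℕ)) *ᵥ v) = ⊤ :=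
      li.span_eq_top_of_card_eq_finrank (by simp)
    rw [eq_top_iff, ← h1, Submodule.span_le]
    rintro _ ⟨m, rfl⟩
    exact ⟨X ^ (m : ℕ), hψX _⟩
  have hsurj : Function.Surjective ψ := LinearMap.range_eq_top.1 hspan
  obtain ⟨f, hf⟩ := hsurj (B *ᵥ v)
  refine ⟨f, ?_⟩
  have hcomm : ∀ g : F[X], B * aeval A g = aeval A g * B := by
    intro g
    induction g using Polynomial.induction_on with
    | C a => rw [aeval_C]; exact (Algebra.commutes a B).symm
    | add f g hf hg => rw [map_add, mul_add, add_mul, hf, hg]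
    | monomial m a ih =>
        have hpow : Commute B (A ^ (m + 1)) := (Commute.pow_right hB (m + 1))
        rw [_root_.map_mul, aeval_C, map_pow, aeval_X]
        calc B * (algebraMap F _ a * A ^ (m + 1))
            = algebraMap F _ a * (B * A ^ (m + 1)) := by
              rw [← mul_assoc, ← Algebra.commutes a B, mul_assoc]
          _ = algebraMap F _ a * A ^ (m + 1) * B := by rw [hpow, mul_assoc]
  apply matrix_ext_mulVec
  intro w
  obtain ⟨g, hg⟩ := hsurj w
  have hg' : aeval A g *ᵥ v = w := hg
  have hf' : aeval A f *ᵥ v = B *ᵥ v := hf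
  rw [← hg', Matrix.mulVec_mulVec, ← _root_.map_mul, mul_comm f g, _root_.map_mul, ← Matrix.mulVec_mulVec,
    hf', Matrix.mulVec_mulVec, ← hcomm g, ← Matrix.mulVec_mulVec]

end aux

theorem card_centraliser_cyclic_primary {F : Type*} [Field F] [Fintype F] [DecidableEq F]
    {n i j : ℕ} (hn : n = i * j) (hj : 0 < j)
    (p : Polynomial F) (hp : p.Monic) (hirr : Irreducible p) (hdeg : p.natDegree = i)
    (A : Matrix (Fin n) (Fin n) F) (hA : minpoly F A = A.charpoly)
    (hch : A.charpoly = p ^ j) :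
    Nat.card {B : (Matrix (Fin n) (Fin n) F)ˣ //
        (B : Matrix (Fin n) (Fin n) F) * A = A * (B : Matrix (Fin n) (Fin n) F)} =
      Fintype.card F ^ (i * (j - 1)) * (Fintype.card F ^ i - 1) := by
  classical
  haveI := Fact.mk hirr
  have hi : 0 < i := by
    rcases Nat.eq_zero_or_pos i with h0 | h
    · exfalso
      apply hirr.not_isUnit
      have : p = 1 := by
        exact hp.natDegree_eq_zero.1 (hdeg.trans h0)
      rw [this]; exact isUnit_one
    · exact h
  have hmin : minpoly F A = p ^ j := hA.trans hch
  have hpj0 : (p : F[X]) ^ j ≠ 0 := pow_ne_zero _ hp.ne_zero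
  -- the algebra map from AdjoinRoot (p^j) to matrices
  have aevalCH : aeval A (p ^ j) = 0 := by rw [← hch]; exact Matrix.aeval_self_charpoly A
  let φ : AdjoinRoot (p ^ j) →+* Matrix (Fin n) (Fin n) F :=
    Ideal.Quotient.lift (Ideal.span {p ^ j})
      ((aeval A : F[X] →ₐ[F] Matrix (Fin n) (Fin n) F) : F[X] →+* Matrix (Fin n) (Fin n) F)
      (by
        intro g hg
        rw [Ideal.mem_span_singleton] at hg
        obtain ⟨c, rfl⟩ := hg
        show aeval A (p ^ j * c) = 0
        rw [_root_.map_mul, aevalCH, zero_mul])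
  have hφmk : ∀ g : F[X], φ (AdjoinRoot.mk (p ^ j) g) = aeval A g := fun g => rfl
  have hφinj : Function.Injective φ := by
    rw [injective_iff_map_eq_zero]
    intro x hx
    obtain ⟨g, rfl⟩ := AdjoinRoot.mk_surjective x
    rw [hφmk] at hx
    have hdvd := minpoly.dvd F A hx
    rw [hmin] at hdvd
    exact AdjoinRoot.mk_eq_zero.2 hdvd
  -- units of AdjoinRoot (p^j) biject with the centraliser
  let e : (AdjoinRoot (p ^ j))ˣ → {B : (Matrix (Fin n) (Fin n) F)ˣ //
      (B : Matrix (Fin n) (Fin n) F) * A = A * (B : Matrix (Fin n) (Fin n) F)} := fun u =>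
    ⟨Units.map (φ : AdjoinRoot (p ^ j) →* Matrix (Fin n) (Fin n) F) u, by
      show φ ↑u * A = A * φ ↑u
      have hAimg : φ (AdjoinRoot.mk (p ^ j) X) = A := by rw [hφmk, aeval_X]
      rw [← hAimg, ← _root_.map_mul, ← _root_.map_mul, mul_comm]⟩
  have hbij : Function.Bijective e := by
    constructor
    · intro u1 u2 h
      apply Units.ext
      apply hφinj
      have := congrArg (fun s : {B : (Matrix (Fin n) (Fin n) F)ˣ // _} =>
        ((s : (Matrix (Fin n) (Fin n) F)ˣ) : Matrix (Fin n) (Fin n) F)) h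
      exact this
    · rintro ⟨B, hB⟩
      obtain ⟨f, hf⟩ := centralizer_eq_aeval hn hj hi p hp hirr hdeg A hmin hch (↑B) hB
      have hBinv : (↑B⁻¹ : Matrix (Fin n) (Fin n) F) * A = A * (↑B⁻¹ : Matrix (Fin n) (Fin n) F) :=
        (Commute.units_inv_left (hB : Commute (↑B : Matrix (Fin n) (Fin n) F) A) :)
      obtain ⟨g, hg⟩ := centralizer_eq_aeval hn hj hi p hp hirr hdeg A hmin hch (↑B⁻¹) hBinv
      have hxy : AdjoinRoot.mk (p ^ j) f * AdjoinRoot.mk (p ^ j) g = 1 := by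
        apply hφinj
        rw [_root_.map_mul, _root_.map_one, hφmk, hφmk, hf, hg]
        exact B.mul_inv
      refine ⟨⟨AdjoinRoot.mk (p ^ j) f, AdjoinRoot.mk (p ^ j) g, hxy,
        by rw [mul_comm]; exact hxy⟩, ?_⟩
      apply Subtype.ext
      apply Units.ext
      show φ (AdjoinRoot.mk (p ^ j) f) = ↑B
      rw [hφmk, hf]
  have hcard1 : Nat.card {B : (Matrix (Fin n) (Fin n) F)ˣ //
      (B : Matrix (Fin n) (Fin n) F) * A = A * (B : Matrix (Fin n) (Fin n) F)} =
      Nat.card (AdjoinRoot (p ^ j))ˣ :=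
    (Nat.card_congr (Equiv.ofBijective e hbij)).symm
  -- finiteness
  haveI : Module.Finite F (AdjoinRoot (p ^ j)) :=
    Module.Finite.of_basis (AdjoinRoot.powerBasis hpj0).basis
  haveI : Module.Finite F (AdjoinRoot p) :=
    Module.Finite.of_basis (AdjoinRoot.powerBasis hp.ne_zero).basis
  haveI : Finite (AdjoinRoot (p ^ j)) := Module.finite_of_finite F
  letI : Fintype (AdjoinRoot (p ^ j)) := Fintype.ofFinite _
  -- the reduction map
  let ρ : AdjoinRoot (p ^ j) →ₐ[F] AdjoinRoot p :=
    AdjoinRoot.liftAlgHom (p ^ j) (Algebra.ofId F (AdjoinRoot p)) (AdjoinRoot.root p)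
      (by show aeval (AdjoinRoot.root p) (p ^ j) = 0; rw [map_pow, AdjoinRoot.aeval_eq, AdjoinRoot.mk_self, zero_pow hj.ne'])
  have hρmk : ∀ g : F[X], ρ (AdjoinRoot.mk (p ^ j) g) = AdjoinRoot.mk p g := fun g => by
    rw [show ρ (AdjoinRoot.mk (p ^ j) g) = aeval (AdjoinRoot.root p) g from
      AdjoinRoot.liftAlgHom_mk _ _ _ _ _, AdjoinRoot.aeval_eq]
  have hρsurj : Function.Surjective ρ := by
    intro y
    obtain ⟨g, rfl⟩ := AdjoinRoot.mk_surjective y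
    exact ⟨AdjoinRoot.mk _ g, hρmk g⟩
  have hunit : ∀ x : AdjoinRoot (p ^ j), IsUnit x ↔ ρ x ≠ 0 := by
    intro x
    constructor
    · intro hx h0
      exact (h0 ▸ hx.map ρ).ne_zero rfl
    · intro hρ
      obtain ⟨g, rfl⟩ := AdjoinRoot.mk_surjective x
      rw [hρmk, Ne, AdjoinRoot.mk_eq_zero] at hρ
      have hcop : IsCoprime (p ^ j) g := (hirr.coprime_iff_not_dvd.2 hρ).pow_left
      obtain ⟨a, b, hab⟩ := hcop
      refine IsUnit.of_mul_eq_one (AdjoinRoot.mk _ b) ?_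
      have := congrArg (AdjoinRoot.mk (p ^ j)) hab
      simpa [map_add, _root_.map_mul, AdjoinRoot.mk_self, mul_comm] using this
  -- kernel of ρ as a linear map
  have hfrQ : Module.finrank F (AdjoinRoot (p ^ j)) = j * i := by
    rw [(AdjoinRoot.powerBasis hpj0).finrank]
    show (p ^ j).natDegree = j * i
    rw [Polynomial.natDegree_pow, hdeg]
  have hfrk : Module.finrank F (LinearMap.ker ρ.toLinearMap) = j * i - i := by
    have h1 := LinearMap.finrank_range_add_finrank_ker ρ.toLinearMap
    have h2 : LinearMap.range ρ.toLinearMap = ⊤ := LinearMap.range_eq_top.2 hρsurj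
    rw [h2, finrank_top] at h1
    have h3 : Module.finrank F (AdjoinRoot p) = i := by
      rw [(AdjoinRoot.powerBasis hp.ne_zero).finrank]
      exact hdeg
    rw [h3, hfrQ] at h1
    omega
  letI : Fintype (LinearMap.ker ρ.toLinearMap) := Fintype.ofFinite _
  have hcQ : Fintype.card (AdjoinRoot (p ^ j)) = Fintype.card F ^ (j * i) := by
    rw [Module.card_eq_pow_finrank (K := F), hfrQ]
  have hcK : Fintype.card (LinearMap.ker ρ.toLinearMap) = Fintype.card F ^ (j * i - i) := by
    rw [Module.card_eq_pow_finrank (K := F), hfrk]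
  -- counting units
  have hnon : Nat.card {x : AdjoinRoot (p ^ j) // ¬IsUnit x} = Fintype.card F ^ (j * i - i) := by
    have he : {x : AdjoinRoot (p ^ j) // ¬IsUnit x} ≃ LinearMap.ker ρ.toLinearMap := by
      apply Equiv.subtypeEquivRight
      intro x
      rw [hunit x, not_not]
      exact ⟨fun h => LinearMap.mem_ker.2 h, fun h => LinearMap.mem_ker.1 h⟩
    rw [Nat.card_congr he, Nat.card_eq_fintype_card, hcK]
  have hQcard : Nat.card (AdjoinRoot (p ^ j)) = Fintype.card F ^ (j * i) := by
    rw [Nat.card_eq_fintype_card, hcQ]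
  have hsum : Nat.card {x : AdjoinRoot (p ^ j) // IsUnit x} +
      Nat.card {x : AdjoinRoot (p ^ j) // ¬IsUnit x} = Nat.card (AdjoinRoot (p ^ j)) := by
    rw [← Nat.card_sum]
    exact Nat.card_congr (Equiv.sumCompl _)
  have hcu : Nat.card (AdjoinRoot (p ^ j))ˣ =
      Nat.card {x : AdjoinRoot (p ^ j) // IsUnit x} :=
    Nat.card_congr
      { toFun := fun u => ⟨↑u, u.isUnit⟩
        invFun := fun x => x.2.unit
        left_inv := fun u => Units.ext u.isUnit.unit_spec
        right_inv := fun x => Subtype.ext x.2.unit_spec }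
  have hq : 1 ≤ Fintype.card F := Fintype.card_pos
  have hqi : 1 ≤ Fintype.card F ^ i := Nat.one_le_pow _ _ hq
  obtain ⟨j', rfl⟩ : ∃ j', j = j' + 1 := ⟨j - 1, by omega⟩
  have harith2 : (j' + 1) * i - i = i * j' := by rw [Nat.succ_mul, Nat.mul_comm j' i]; omega
  have hexp : i * j' + i = (j' + 1) * i := by rw [Nat.succ_mul]; ring
  rw [hcard1, hcu]
  rw [hnon, hQcard, harith2] at hsum
  have hfinal : Fintype.card F ^ (i * (j' + 1 - 1)) * (Fintype.card F ^ i - 1) =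
      Fintype.card F ^ ((j' + 1) * i) - Fintype.card F ^ (i * j') := by
    rw [show j' + 1 - 1 = j' from rfl, Nat.mul_sub, mul_one, ← pow_add, hexp]
  rw [hfinal]
  have hple : Fintype.card F ^ (i * j') ≤ Fintype.card F ^ ((j' + 1) * i) :=
    Nat.pow_le_pow_right hq (by rw [Nat.succ_mul, Nat.mul_comm j' i]; omega)
  omega
end
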